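/- Let f and g be homogeneous polynomials of degrees r and s respectively in the variables (x,y) ∈ ℝ^{2N}. Then the Poisson bracket {f,g} is a homogeneous polynomial of degree r+s−2 and satisfies ‖{f,g}‖ ≤ r s ‖f‖ ‖g‖. Moreover {f, g^⊕} is a seed of {f^⊕, g^⊕} and satisfies ‖{f, g^⊕}‖ ≤ r s ‖f‖ ‖g‖. -/

import Mathlib

open MvPolynomial

/-- Polynomials in the `2N` phase-space variables: `Sum.inl l ↦ x_l`, `Sum.inr l ↦ y_l`. -/
abbrev Pol (N : ℕ) := MvPolynomial (Fin N ⊕ Fin N) ℝ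

/-- Poisson bracket `{f,g} = Σ_l (∂f/∂x_l ∂g/∂y_l − ∂f/∂y_l ∂g/∂x_l)`. -/
noncomputable def pbracket {N : ℕ} (f g : Pol N) : Pol N :=
  ∑ l : Fin N,
    (pderiv (Sum.inl l) f * pderiv (Sum.inr l) g -
      pderiv (Sum.inr l) f * pderiv (Sum.inl l) g)

/-- Polynomial norm: the sum of the absolute values of the coefficients. -/
noncomputable def pnorm {N : ℕ} (f : Pol N) : ℝ :=
  ∑ d ∈ f.support, |coeff d f|

/-- Action of the cyclic permutation `τ` on polynomials: `(τ f)(x,y) = f(τx, τy)`. -/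
noncomputable def cshiftP {N : ℕ} (f : Pol N) : Pol N :=
  rename (Sum.map (finRotate N : Fin N → Fin N) (finRotate N : Fin N → Fin N)) f

/-- The extensive function generated by a seed: `f^⊕ = Σ_{l=1}^N τ^l f`. -/
noncomputable def oplus {N : ℕ} (f : Pol N) : Pol N :=
  ∑ l ∈ Finset.Icc 1 N, cshiftP^[l] f

/-- for homogeneous polynomials `f, g` of degrees `r, s`, the Poisson
bracket `{f,g}` is homogeneous of degree `r+s−2` with `‖{f,g}‖ ≤ rs‖f‖‖g‖`; moreover
`{f, g^⊕}` is a seed of `{f^⊕, g^⊕}` and `‖{f, g^⊕}‖ ≤ rs‖f‖‖g‖`. -/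


lemma pnorm_eq_sum {N : ℕ} (f : Pol N) (S : Finset ((Fin N ⊕ Fin N) →₀ ℕ))
    (h : f.support ⊆ S) : pnorm f = ∑ d ∈ S, |coeff d f| := by
  refine Finset.sum_subset h fun d _ hd => ?_
  rw [MvPolynomial.notMem_support_iff.mp hd, abs_zero]

lemma pnorm_nonneg {N : ℕ} (f : Pol N) : 0 ≤ pnorm f :=
  Finset.sum_nonneg fun _ _ => abs_nonneg _

lemma pnorm_zero {N : ℕ} : pnorm (0 : Pol N) = 0 := by simp [pnorm]

lemma pnorm_add_le {N : ℕ} (f g : Pol N) : pnorm (f + g) ≤ pnorm f + pnorm g := by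
  classical
  set S := f.support ∪ g.support ∪ (f + g).support with hS
  rw [pnorm_eq_sum (f+g) S (by intro d hd; simp [hS, hd]), pnorm_eq_sum f S (by intro d hd; simp [hS, hd]),
    pnorm_eq_sum g S (by intro d hd; simp [hS, hd]), ← Finset.sum_add_distrib]
  exact Finset.sum_le_sum fun d _ => by rw [coeff_add]; exact abs_add_le _ _

lemma pnorm_neg {N : ℕ} (f : Pol N) : pnorm (-f) = pnorm f := by
  classical
  rw [pnorm_eq_sum (-f) f.support (by simp), pnorm]
  exact Finset.sum_congr rfl fun d _ => by rw [coeff_neg, abs_neg]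

lemma pnorm_sub_le {N : ℕ} (f g : Pol N) : pnorm (f - g) ≤ pnorm f + pnorm g := by
  rw [sub_eq_add_neg]
  simpa [pnorm_neg] using pnorm_add_le f (-g)

lemma pnorm_sum_le {N : ℕ} {ι : Type*} (S : Finset ι) (f : ι → Pol N) :
    pnorm (∑ i ∈ S, f i) ≤ ∑ i ∈ S, pnorm (f i) := by
  classical
  induction S using Finset.induction with
  | empty => simp [pnorm_zero]
  | insert _ _ h ih =>
      rw [Finset.sum_insert h, Finset.sum_insert h]
      exact le_trans (pnorm_add_le _ _) (by linarith)

lemma pnorm_monomial_le {N : ℕ} (a : (Fin N ⊕ Fin N) →₀ ℕ) (c : ℝ) :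
    pnorm (monomial a c) ≤ |c| := by
  classical
  rcases eq_or_ne c 0 with rfl | hc
  · simp [pnorm_zero]
  · rw [pnorm_eq_sum _ {a} (by rw [support_monomial]; simp [hc])]
    simp [coeff_monomial]

lemma pnorm_mul_le {N : ℕ} (f g : Pol N) : pnorm (f * g) ≤ pnorm f * pnorm g := by
  classical
  conv_lhs => rw [f.as_sum, g.as_sum, Finset.sum_mul_sum]
  refine le_trans (pnorm_sum_le _ _) ?_
  rw [pnorm, pnorm, Finset.sum_mul_sum]
  refine Finset.sum_le_sum fun a _ => le_trans (pnorm_sum_le _ _) ?_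
  refine Finset.sum_le_sum fun b _ => ?_
  rw [monomial_mul]
  exact le_trans (pnorm_monomial_le _ _) (le_of_eq (abs_mul _ _))


lemma degree_eq_sum_univ {N : ℕ} (d : (Fin N ⊕ Fin N) →₀ ℕ) :
    d.degree = ∑ i : Fin N ⊕ Fin N, d i := by
  rw [Finsupp.degree]
  exact Finset.sum_subset (Finset.subset_univ _)
    (fun i _ hi => Finsupp.notMem_support_iff.mp hi)

lemma homog_degree {N : ℕ} {f : Pol N} {r : ℕ} (hf : f.IsHomogeneous r)
    {d : (Fin N ⊕ Fin N) →₀ ℕ} (hd : d ∈ f.support) : d.degree = r := by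
  by_contra h
  exact MvPolynomial.mem_support_iff.mp hd (hf.coeff_eq_zero h)

lemma pderiv_homog {N : ℕ} {f : Pol N} {r : ℕ} (hf : f.IsHomogeneous r)
    (v : Fin N ⊕ Fin N) : (pderiv v f).IsHomogeneous (r - 1) := by
  classical
  conv_lhs => rw [f.as_sum]
  rw [map_sum]
  refine IsHomogeneous.sum _ _ _ fun a ha => ?_
  rw [pderiv_monomial]
  rcases Nat.eq_zero_or_pos (a v) with h0 | h1
  · rw [h0]; simp [isHomogeneous_zero]
  · refine isHomogeneous_monomial _ ?_
    have hle : Finsupp.single v 1 ≤ a := by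
      rw [Finsupp.single_le_iff]; exact h1
    have hadd : (a - Finsupp.single v 1) + Finsupp.single v 1 = a :=
      tsub_add_cancel_of_le hle
    have hdeg : (a - Finsupp.single v 1).degree + 1 = r := by
      have := congrArg Finsupp.degree hadd
      rw [degree_eq_sum_univ, Finsupp.coe_add] at this
      simp only [Pi.add_apply] at this
      rw [Finset.sum_add_distrib, ← degree_eq_sum_univ, ← degree_eq_sum_univ] at this
      have hs : (Finsupp.single v 1 : (Fin N ⊕ Fin N) →₀ ℕ).degree = 1 := by
        exact Finsupp.degree_single v 1
      rw [hs] at this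
      rw [this, homog_degree hf ha]
    omega

lemma pnorm_pderiv_le {N : ℕ} (f : Pol N) (v : Fin N ⊕ Fin N) :
    pnorm (pderiv v f) ≤ ∑ a ∈ f.support, |coeff a f| * (a v : ℝ) := by
  classical
  conv_lhs => rw [f.as_sum]
  rw [map_sum]
  refine le_trans (pnorm_sum_le _ _) (Finset.sum_le_sum fun a _ => ?_)
  rw [pderiv_monomial]
  refine le_trans (pnorm_monomial_le _ _) ?_
  rw [abs_mul, Nat.abs_cast]

lemma sum_pnorm_pderiv_le {N : ℕ} {f : Pol N} {r : ℕ} (hf : f.IsHomogeneous r) :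
    ∑ v : Fin N ⊕ Fin N, pnorm (pderiv v f) ≤ (r : ℝ) * pnorm f := by
  classical
  refine le_trans (Finset.sum_le_sum fun v _ => pnorm_pderiv_le f v) ?_
  rw [Finset.sum_comm]
  have : ∀ a ∈ f.support, ∑ v : Fin N ⊕ Fin N, |coeff a f| * (a v : ℝ)
      = (r : ℝ) * |coeff a f| := by
    intro a ha
    rw [← Finset.mul_sum]
    have : ∑ v : Fin N ⊕ Fin N, (a v : ℝ) = (r : ℝ) := by
      rw [← Nat.cast_sum, ← degree_eq_sum_univ, homog_degree hf ha]
    rw [this, mul_comm]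
  rw [Finset.sum_congr rfl this, ← Finset.mul_sum, pnorm]

lemma pnorm_pderiv_le_homog {N : ℕ} {f : Pol N} {r : ℕ} (hf : f.IsHomogeneous r)
    (v : Fin N ⊕ Fin N) : pnorm (pderiv v f) ≤ (r : ℝ) * pnorm f := by
  classical
  refine le_trans (pnorm_pderiv_le f v) ?_
  rw [pnorm, Finset.mul_sum]
  refine Finset.sum_le_sum fun a ha => ?_
  rw [mul_comm]
  have hle : a v ≤ a.degree := by
    rw [degree_eq_sum_univ]
    exact Finset.single_le_sum (fun i _ => Nat.zero_le _) (Finset.mem_univ v)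
  rw [homog_degree hf ha] at hle
  exact mul_le_mul_of_nonneg_right (Nat.cast_le.mpr hle) (abs_nonneg _)


lemma pderiv_zero_of_homog_zero {N : ℕ} {f : Pol N} (hf : f.IsHomogeneous 0)
    (v : Fin N ⊕ Fin N) : pderiv v f = 0 := by
  conv_lhs => rw [f.as_sum]
  rw [map_sum]
  refine Finset.sum_eq_zero fun a ha => ?_
  have ha0 : a = 0 := (Finsupp.degree_eq_zero_iff a).mp (homog_degree hf ha)
  rw [pderiv_monomial, ha0]
  simp

lemma pbracket_homog {N : ℕ} {f g : Pol N} {r s : ℕ} (hf : f.IsHomogeneous r)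
    (hg : g.IsHomogeneous s) : (pbracket f g).IsHomogeneous (r + s - 2) := by
  rcases Nat.eq_zero_or_pos r with hr | hr
  · subst hr
    have : pbracket f g = 0 := by
      rw [pbracket]
      refine Finset.sum_eq_zero fun l _ => ?_
      rw [pderiv_zero_of_homog_zero hf, pderiv_zero_of_homog_zero hf]
      ring
    rw [this]; exact isHomogeneous_zero _ _ _
  rcases Nat.eq_zero_or_pos s with hs | hs
  · subst hs
    have : pbracket f g = 0 := by
      rw [pbracket]
      refine Finset.sum_eq_zero fun l _ => ?_
      rw [pderiv_zero_of_homog_zero hg, pderiv_zero_of_homog_zero hg]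
      ring
    rw [this]; exact isHomogeneous_zero _ _ _
  · rw [pbracket]
    have hd : (r - 1) + (s - 1) = r + s - 2 := by omega
    refine IsHomogeneous.sum _ _ _ fun l _ => ?_
    rw [← hd]
    exact ((pderiv_homog hf _).mul (pderiv_homog hg _)).sub
      ((pderiv_homog hf _).mul (pderiv_homog hg _))

lemma pnorm_pbracket_le {N : ℕ} (f G : Pol N) (B : ℝ) (hB : 0 ≤ B)
    (h : ∀ v, pnorm (pderiv v G) ≤ B) :
    pnorm (pbracket f G) ≤ (∑ v : Fin N ⊕ Fin N, pnorm (pderiv v f)) * B := by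
  rw [pbracket]
  refine le_trans (pnorm_sum_le _ _) ?_
  have hstep : ∀ l : Fin N,
      pnorm (pderiv (Sum.inl l) f * pderiv (Sum.inr l) G -
        pderiv (Sum.inr l) f * pderiv (Sum.inl l) G)
      ≤ (pnorm (pderiv (Sum.inl l) f) + pnorm (pderiv (Sum.inr l) f)) * B := by
    intro l
    refine le_trans (pnorm_sub_le _ _) ?_
    rw [add_mul]
    refine add_le_add (le_trans (pnorm_mul_le _ _) ?_) (le_trans (pnorm_mul_le _ _) ?_)
    · exact mul_le_mul_of_nonneg_left (h _) (pnorm_nonneg _)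
    · exact mul_le_mul_of_nonneg_left (h _) (pnorm_nonneg _)
  refine le_trans (Finset.sum_le_sum fun l _ => hstep l) ?_
  rw [← Finset.sum_mul, Fintype.sum_sum_type, Finset.sum_add_distrib]

lemma pnorm_pbracket_le_homog {N : ℕ} {f G : Pol N} {r : ℕ} (hf : f.IsHomogeneous r)
    (s : ℕ) (g : Pol N) (hg0 : 0 ≤ pnorm g)
    (h : ∀ v, pnorm (pderiv v G) ≤ (s : ℝ) * pnorm g) :
    pnorm (pbracket f G) ≤ (r : ℝ) * s * pnorm f * pnorm g := by
  have hB : 0 ≤ (s : ℝ) * pnorm g := mul_nonneg (Nat.cast_nonneg _) hg0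
  refine le_trans (pnorm_pbracket_le f G _ hB h) ?_
  have := mul_le_mul_of_nonneg_right (sum_pnorm_pderiv_le hf) hB
  refine le_trans this (le_of_eq ?_)
  ring

open Fin.NatCast Fin.CommRing in
lemma rot_pow {n : ℕ} (k : ℕ) (l : Fin (n + 1)) :
    ((finRotate (n + 1)) ^ k) l = l + (k : Fin (n + 1)) := by
  induction k generalizing l with
  | zero => simp
  | succ k ih =>
      rw [pow_succ, Equiv.Perm.mul_apply, finRotate_succ_apply, ih (l + 1)]
      push_cast
      ring

open Fin.NatCast Fin.CommRing in
lemma rot_pow_inv {n : ℕ} (k : ℕ) (l : Fin (n + 1)) :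
    (((finRotate (n + 1)) ^ k)⁻¹) l = l - (k : Fin (n + 1)) := by
  have h : ((finRotate (n + 1)) ^ k) (l - (k : Fin (n + 1))) = l := by
    rw [rot_pow]; ring
  conv_lhs => rw [← h]
  exact Equiv.symm_apply_apply _ _

lemma cshiftP_iter {N : ℕ} (k : ℕ) (g : Pol N) :
    cshiftP^[k] g = rename (Sum.map (((finRotate N) ^ k : Equiv.Perm (Fin N)) : Fin N → Fin N)
      (((finRotate N) ^ k : Equiv.Perm (Fin N)) : Fin N → Fin N)) g := by
  induction k with
  | zero =>
      simp only [Function.iterate_zero, id_eq, pow_zero, Equiv.Perm.coe_one, Sum.map_id_id]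
      rw [rename_id, AlgHom.id_apply]
  | succ k ih =>
      rw [Function.iterate_succ_apply', ih, cshiftP, rename_rename]
      congr 1
      rw [pow_succ']
      ext v
      cases v <;> simp [Equiv.Perm.mul_apply]

lemma cshiftP_iter_self {N : ℕ} (g : Pol N) : cshiftP^[N] g = g := by
  cases N with
  | zero => simp
  | succ n =>
      rw [cshiftP_iter]
      have : (((finRotate (n + 1)) ^ (n + 1) : Equiv.Perm (Fin (n + 1))) : Fin (n + 1) → Fin (n + 1)) = id := by
        funext l
        rw [rot_pow, Fin.natCast_self, add_zero, id_eq]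
      rw [this, Sum.map_id_id, rename_id, AlgHom.id_apply]

lemma pnorm_rename {N : ℕ} {φ : (Fin N ⊕ Fin N) → (Fin N ⊕ Fin N)}
    (hφ : Function.Injective φ) (f : Pol N) : pnorm (rename φ f) = pnorm f := by
  classical
  rw [pnorm, support_rename_of_injective hφ, Finset.sum_image
    (fun a _ b _ hab => Finsupp.mapDomain_injective hφ hab), pnorm]
  exact Finset.sum_congr rfl fun d _ => by rw [coeff_rename_mapDomain φ hφ]

lemma oplus_eq_range {N : ℕ} (g : Pol N) :
    oplus g = ∑ i ∈ Finset.range N, cshiftP^[i + 1] g := by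
  rw [oplus]
  rw [show Finset.Icc 1 N = Finset.Ico 1 (N + 1) by rw [Nat.Icc_eq_range', Nat.Ico_eq_range']]
  rw [Finset.sum_Ico_eq_sum_range]
  simp [add_comm]

lemma cshiftP_oplus {N : ℕ} (g : Pol N) : cshiftP (oplus g) = oplus g := by
  rw [oplus_eq_range]
  rw [show cshiftP (∑ i ∈ Finset.range N, cshiftP^[i + 1] g)
      = ∑ i ∈ Finset.range N, cshiftP^[i + 1 + 1] g by
    rw [cshiftP, map_sum]
    exact Finset.sum_congr rfl fun i _ => by
      rw [← cshiftP, (Function.iterate_succ_apply' cshiftP (i + 1) g).symm]]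
  have h1 : ∑ i ∈ Finset.range (N + 1), cshiftP^[i + 1] g
      = ∑ i ∈ Finset.range N, cshiftP^[i + 1 + 1] g + cshiftP^[0 + 1] g :=
    Finset.sum_range_succ' (fun i => cshiftP^[i + 1] g) N
  have h2 : ∑ i ∈ Finset.range (N + 1), cshiftP^[i + 1] g
      = ∑ i ∈ Finset.range N, cshiftP^[i + 1] g + cshiftP^[N + 1] g :=
    Finset.sum_range_succ (fun i => cshiftP^[i + 1] g) N
  have h3 : cshiftP^[N + 1] g = cshiftP^[0 + 1] g := by
    rw [Function.iterate_succ_apply, cshiftP_iter_self (cshiftP g)]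
    simp
  rw [h3] at h2
  have := h1.symm.trans h2
  exact add_right_cancel this

lemma cshiftP_iter_oplus {N : ℕ} (k : ℕ) (g : Pol N) :
    cshiftP^[k] (oplus g) = oplus g := by
  induction k with
  | zero => simp
  | succ k ih => rw [Function.iterate_succ_apply', ih, cshiftP_oplus]

lemma cshiftP_pbracket {N : ℕ} (p q : Pol N) :
    cshiftP (pbracket p q) = pbracket (cshiftP p) (cshiftP q) := by
  have hinj : Function.Injective (Sum.map (⇑(finRotate N)) (⇑(finRotate N))) :=
    Function.Injective.sumMap (finRotate N).injective (finRotate N).injective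
  rw [pbracket, cshiftP, map_sum]
  have hterm : ∀ l : Fin N,
      (rename (Sum.map (⇑(finRotate N)) (⇑(finRotate N))))
        (pderiv (Sum.inl l) p * pderiv (Sum.inr l) q -
          pderiv (Sum.inr l) p * pderiv (Sum.inl l) q)
      = pderiv (Sum.inl (finRotate N l)) (cshiftP p) *
          pderiv (Sum.inr (finRotate N l)) (cshiftP q) -
        pderiv (Sum.inr (finRotate N l)) (cshiftP p) *
          pderiv (Sum.inl (finRotate N l)) (cshiftP q) := by
    intro l
    simp only [map_sub, map_mul, cshiftP, ← pderiv_rename hinj, Sum.map_inl, Sum.map_inr]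
  rw [Finset.sum_congr rfl (fun l _ => hterm l), pbracket]
  exact Equiv.sum_comp (finRotate N)
    (fun m => pderiv (Sum.inl m) (cshiftP p) * pderiv (Sum.inr m) (cshiftP q) -
      pderiv (Sum.inr m) (cshiftP p) * pderiv (Sum.inl m) (cshiftP q))

lemma cshiftP_iter_pbracket {N : ℕ} (k : ℕ) (p q : Pol N) :
    cshiftP^[k] (pbracket p q) = pbracket (cshiftP^[k] p) (cshiftP^[k] q) := by
  induction k with
  | zero => simp
  | succ k ih =>
      rw [Function.iterate_succ_apply', Function.iterate_succ_apply',
        Function.iterate_succ_apply', ih, cshiftP_pbracket]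

lemma pbracket_sum_left {N : ℕ} {ι : Type*} (S : Finset ι) (p : ι → Pol N) (q : Pol N) :
    pbracket (∑ i ∈ S, p i) q = ∑ i ∈ S, pbracket (p i) q := by
  simp only [pbracket, map_sum, Finset.sum_mul, ← Finset.sum_sub_distrib]
  exact Finset.sum_comm

lemma oplus_pbracket_oplus {N : ℕ} (f g : Pol N) :
    oplus (pbracket f (oplus g)) = pbracket (oplus f) (oplus g) := by
  rw [oplus_eq_range (pbracket f (oplus g))]
  have h1 : ∀ i ∈ Finset.range N, cshiftP^[i + 1] (pbracket f (oplus g))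
      = pbracket (cshiftP^[i + 1] f) (oplus g) := by
    intro i _
    rw [cshiftP_iter_pbracket, cshiftP_iter_oplus]
  rw [Finset.sum_congr rfl h1, ← pbracket_sum_left, ← oplus_eq_range]

open Fin.NatCast Fin.CommRing in
lemma sum_shift {n : ℕ} (l : Fin (n + 1)) (F : Fin (n + 1) → ℝ) :
    ∑ i ∈ Finset.range (n + 1), F (l - ((i + 1 : ℕ) : Fin (n + 1)))
      = ∑ j : Fin (n + 1), F j := by
  have h1 : ∑ j : Fin (n + 1), F (l - 1 - j)
      = ∑ i ∈ Finset.range (n + 1), F (l - ((i + 1 : ℕ) : Fin (n + 1))) := by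
    rw [← Fin.sum_univ_eq_sum_range (fun i => F (l - ((i + 1 : ℕ) : Fin (n + 1)))) (n + 1)]
    refine Finset.sum_congr rfl fun j _ => ?_
    congr 1
    push_cast
    ring
  rw [← h1]
  have h2 := Equiv.sum_comp (Equiv.subLeft (l - 1)) F
  simp only [Equiv.subLeft_apply] at h2
  exact h2

lemma pnorm_pderiv_cshift_iter {N : ℕ} (k : ℕ) (g : Pol N) (w : Fin N ⊕ Fin N) :
    pnorm (pderiv (Sum.map (⇑((finRotate N) ^ k)) (⇑((finRotate N) ^ k)) w)
      (cshiftP^[k] g)) = pnorm (pderiv w g) := by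
  have hinj : Function.Injective
      (Sum.map (⇑((finRotate N) ^ k)) (⇑((finRotate N) ^ k))) :=
    Function.Injective.sumMap ((finRotate N) ^ k).injective ((finRotate N) ^ k).injective
  rw [cshiftP_iter, pderiv_rename hinj, pnorm_rename hinj]

open Fin.NatCast Fin.CommRing in
lemma pnorm_pderiv_oplus_le {N : ℕ} {g : Pol N} {s : ℕ} (hg : g.IsHomogeneous s)
    (v : Fin N ⊕ Fin N) : pnorm (pderiv v (oplus g)) ≤ (s : ℝ) * pnorm g := by
  cases N with
  | zero => cases v with
    | inl l => exact l.elim0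
    | inr l => exact l.elim0
  | succ n =>
      rw [oplus_eq_range, map_sum]
      refine le_trans (pnorm_sum_le _ _) ?_
      have key : ∀ (l : Fin (n + 1)) (i : ℕ),
          (pnorm (pderiv (Sum.inl l) (cshiftP^[i + 1] g))
            = pnorm (pderiv (Sum.inl (l - ((i + 1 : ℕ) : Fin (n + 1)))) g)) ∧
          (pnorm (pderiv (Sum.inr l) (cshiftP^[i + 1] g))
            = pnorm (pderiv (Sum.inr (l - ((i + 1 : ℕ) : Fin (n + 1)))) g)) := by
        intro l i
        have hL : Sum.inl l = Sum.map (⇑((finRotate (n + 1)) ^ (i + 1)))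
            (⇑((finRotate (n + 1)) ^ (i + 1)))
            (Sum.inl (l - ((i + 1 : ℕ) : Fin (n + 1)))) := by
          simp only [Sum.map_inl]
          congr 1
          rw [rot_pow]
          ring
        have hR : Sum.inr l = Sum.map (⇑((finRotate (n + 1)) ^ (i + 1)))
            (⇑((finRotate (n + 1)) ^ (i + 1)))
            (Sum.inr (l - ((i + 1 : ℕ) : Fin (n + 1)))) := by
          simp only [Sum.map_inr]
          congr 1
          rw [rot_pow]
          ring
        constructor
        · rw [hL, pnorm_pderiv_cshift_iter]
        · rw [hR, pnorm_pderiv_cshift_iter]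
      have hfull := sum_pnorm_pderiv_le hg
      rw [Fintype.sum_sum_type] at hfull
      cases v with
      | inl l =>
          have : ∑ i ∈ Finset.range (n + 1), pnorm (pderiv (Sum.inl l) (cshiftP^[i + 1] g))
              = ∑ j : Fin (n + 1), pnorm (pderiv (Sum.inl j) g) := by
            rw [Finset.sum_congr rfl fun i _ => (key l i).1]
            exact sum_shift l (fun j => pnorm (pderiv (Sum.inl j) g))
          rw [this]
          refine le_trans (le_add_of_nonneg_right
            (Finset.sum_nonneg fun j _ => pnorm_nonneg _)) hfull
      | inr l =>
          have : ∑ i ∈ Finset.range (n + 1), pnorm (pderiv (Sum.inr l) (cshiftP^[i + 1] g))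
              = ∑ j : Fin (n + 1), pnorm (pderiv (Sum.inr j) g) := by
            rw [Finset.sum_congr rfl fun i _ => (key l i).2]
            exact sum_shift l (fun j => pnorm (pderiv (Sum.inr j) g))
          rw [this]
          refine le_trans (le_add_of_nonneg_left
            (Finset.sum_nonneg fun j _ => pnorm_nonneg _)) hfull

theorem stmt3 (N : ℕ) (r s : ℕ) (f g : Pol N)
    (hf : f.IsHomogeneous r) (hg : g.IsHomogeneous s) :
    (pbracket f g).IsHomogeneous (r + s - 2) ∧
    pnorm (pbracket f g) ≤ (r : ℝ) * s * pnorm f * pnorm g ∧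
    oplus (pbracket f (oplus g)) = pbracket (oplus f) (oplus g) ∧
    pnorm (pbracket f (oplus g)) ≤ (r : ℝ) * s * pnorm f * pnorm g := by
  refine ⟨pbracket_homog hf hg, ?_, oplus_pbracket_oplus f g, ?_⟩
  · exact pnorm_pbracket_le_homog hf s g (pnorm_nonneg g)
      (fun v => pnorm_pderiv_le_homog hg v)
  · exact pnorm_pbracket_le_homog hf s g (pnorm_nonneg g)
      (fun v => pnorm_pderiv_oplus_le hg v)
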